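/- Let β < 1/2, γ > 0, and let g : D → [0,∞) be decreasing with g(γ,1) = γ. Define w : (0,∞) → (0,∞) implicitly by w/(r(1+w²)^β) = γ. Then w is a (weak) subsolution of the translator ODE: w'(r) ≤ (1+w²)^{1+β} g(w/(r(1+w²)^β), 1) for all r > 0. -/

import Mathlib

/-- The function w defined implicitly by w/(r(1+w²)^β) = γ is a weak subsolution of
the translator ODE v' = (1+v²)^{1+β} g(v/(r(1+v²)^β), 1). -/
theorem stmt14 (β γ : ℝ) (hβ : β < 1 / 2) (hγ : 0 < γ)
    (g : ℝ → ℝ) (hganti : AntitoneOn g (Set.Ioi 0)) (hgnn : ∀ x > (0 : ℝ), 0 ≤ g x)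
    (hgγ : g γ = γ) (w : ℝ → ℝ)
    (hw : ∀ r > (0 : ℝ), 0 < w r ∧ w r / (r * (1 + (w r) ^ 2) ^ β) = γ) :
    ∀ r > (0 : ℝ), ∀ d : ℝ, HasDerivAt w d r →
      d ≤ (1 + (w r) ^ 2) ^ (1 + β) * g (w r / (r * (1 + (w r) ^ 2) ^ β)) := by
  intro r hr d hd
  obtain ⟨hW, hrel⟩ := hw r hr
  set W := w r with hWdef
  have h1 : (0:ℝ) < 1 + W ^ 2 := by positivity
  have hA : (0:ℝ) < (1 + W ^ 2) ^ β := Real.rpow_pos_of_pos h1 β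
  have hP : (0:ℝ) < (1 + W ^ 2) ^ (1 + β) := Real.rpow_pos_of_pos h1 _
  -- derivative of F x = x / (1+x²)^β at W
  have hsq : HasDerivAt (fun x : ℝ => 1 + x ^ 2) (2 * W) W := by
    simpa using ((hasDerivAt_pow 2 W).const_add 1)
  have hu : HasDerivAt (fun x : ℝ => (1 + x ^ 2) ^ β)
      (β * (1 + W ^ 2) ^ (β - 1) * (2 * W)) W := by
    have := (Real.hasDerivAt_rpow_const (p := β) (Or.inl h1.ne')).comp W hsq
    exact this
  have hF : HasDerivAt (fun x : ℝ => x / (1 + x ^ 2) ^ β)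
      ((1 * (1 + W ^ 2) ^ β - W * (β * (1 + W ^ 2) ^ (β - 1) * (2 * W))) /
        ((1 + W ^ 2) ^ β) ^ 2) W :=
    (hasDerivAt_id W).div hu hA.ne'
  -- composition with w
  have hFw := hF.comp r hd
  -- the composite equals s ↦ γ * s near r
  have heq : (fun s => w s / (1 + (w s) ^ 2) ^ β) =ᶠ[nhds r] fun s => γ * s := by
    filter_upwards [Ioi_mem_nhds hr] with s hs
    obtain ⟨hWs, hrels⟩ := hw s hs
    have hs' : (0:ℝ) < s := hs
    have hAs : (0:ℝ) < (1 + (w s) ^ 2) ^ β := Real.rpow_pos_of_pos (by positivity) β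
    field_simp at hrels ⊢
    linarith [hrels]
  have hlin : HasDerivAt (fun s => w s / (1 + (w s) ^ 2) ^ β) γ r := by
    have : HasDerivAt (fun s : ℝ => γ * s) γ r := by
      simpa using (hasDerivAt_id r).const_mul γ
    exact this.congr_of_eventuallyEq heq
  have huniq : (1 * (1 + W ^ 2) ^ β - W * (β * (1 + W ^ 2) ^ (β - 1) * (2 * W))) /
      ((1 + W ^ 2) ^ β) ^ 2 * d = γ := by
    have := hFw.unique hlin
    simpa [Function.comp] using this
  -- simplify the derivative of F
  have hsub : (1 + W ^ 2) ^ (β - 1) = (1 + W ^ 2) ^ β / (1 + W ^ 2) := by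
    rw [Real.rpow_sub h1, Real.rpow_one]
  have hadd : (1 + W ^ 2) ^ (1 + β) = (1 + W ^ 2) * (1 + W ^ 2) ^ β := by
    rw [Real.rpow_add h1, Real.rpow_one]
  have hFval : (1 * (1 + W ^ 2) ^ β - W * (β * (1 + W ^ 2) ^ (β - 1) * (2 * W))) /
      ((1 + W ^ 2) ^ β) ^ 2
      = (1 + (1 - 2 * β) * W ^ 2) / (1 + W ^ 2) ^ (1 + β) := by
    rw [hsub, hadd]
    field_simp
    ring
  rw [hFval] at huniq
  have hden : (1:ℝ) ≤ 1 + (1 - 2 * β) * W ^ 2 := by nlinarith [sq_nonneg W]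
  have hd' : d = γ * (1 + W ^ 2) ^ (1 + β) / (1 + (1 - 2 * β) * W ^ 2) := by
    have hden0 : (0:ℝ) < 1 + (1 - 2 * β) * W ^ 2 := by linarith
    field_simp at huniq ⊢
    linarith [huniq]
  rw [hrel, hgγ, hd']
  calc γ * (1 + W ^ 2) ^ (1 + β) / (1 + (1 - 2 * β) * W ^ 2)
      ≤ γ * (1 + W ^ 2) ^ (1 + β) := div_le_self (by positivity) hden
    _ = (1 + W ^ 2) ^ (1 + β) * γ := by ring
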